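/- Let a_{l,m} = (2l+4m)!/((l+m)!·l!·(m!)³), and let γ_{N+1} = 64·(4 + 1/(N+1)). If complex λ, μ satisfy γ_{N+1}·(|λ|+|μ|) < 1, then |Σ_{l+m≥N+1} l·a_{l,m}·λ^(l−1)·μ^m| ≤ ((4(N+1))!/(N!·((N+1)!)³))·(|λ|+|μ|)^N/(1 − γ_{N+1}(|λ|+|μ|)), and the same bound holds for |Σ_{l+m≥N+1} m·a_{l,m}·λ^l·μ^(m−1)|. -/

import Mathlib

noncomputable def aCoeff (l m : ℕ) : ℝ :=
  ((2 * l + 4 * m).factorial : ℝ) /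
    (((l + m).factorial : ℝ) * (l.factorial : ℝ) * ((m.factorial : ℝ)) ^ 3)

lemma one_step (l m : ℕ) :
    (2*l+4*m+2).factorial * ((m+1).factorial)^2 ≤ (2*l+4*m+4).factorial * (m.factorial)^2 := by
  have h1 : (2*l+4*m+4).factorial = (2*l+4*m+4) * ((2*l+4*m+3) * (2*l+4*m+2).factorial) := by
    rw [show 2*l+4*m+4 = (2*l+4*m+3)+1 by ring, Nat.factorial_succ,
        show 2*l+4*m+3 = (2*l+4*m+2)+1 by ring, Nat.factorial_succ]
  have h2 : ((m+1).factorial)^2 = (m+1)^2 * (m.factorial)^2 := by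
    rw [Nat.factorial_succ]; ring
  rw [h1, h2]
  have hb : (m+1)^2 ≤ (2*l+4*m+4) * (2*l+4*m+3) := by nlinarith
  calc (2*l+4*m+2).factorial * ((m+1)^2 * (m.factorial)^2)
      ≤ (2*l+4*m+2).factorial * (((2*l+4*m+4)*(2*l+4*m+3)) * (m.factorial)^2) :=
        Nat.mul_le_mul_left _ (Nat.mul_le_mul_right _ hb)
    _ = (2*l+4*m+4) * ((2*l+4*m+3) * (2*l+4*m+2).factorial) * (m.factorial)^2 := by ring

lemma chain_nat (l : ℕ) : ∀ m : ℕ,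
    (2*l+4*m).factorial * ((l+m).factorial)^2 ≤ (4*(l+m)).factorial * (m.factorial)^2 := by
  induction l with
  | zero => intro m; simp [Nat.zero_add]
  | succ l ih =>
    intro m
    have hih := ih (m+1)
    -- hih : (2*l+4*(m+1))! * ((l+(m+1))!)^2 ≤ (4*(l+(m+1)))! * ((m+1)!)^2
    have hstep := one_step l m
    have key : (2*(l+1)+4*m).factorial * (((l+1)+m).factorial)^2 * ((m+1).factorial)^2
        ≤ (4*((l+1)+m)).factorial * (m.factorial)^2 * ((m+1).factorial)^2 := by
      calc (2*(l+1)+4*m).factorial * (((l+1)+m).factorial)^2 * ((m+1).factorial)^2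
          = (2*l+4*m+2).factorial * ((m+1).factorial)^2 * ((l+(m+1)).factorial)^2 := by
            rw [show 2*(l+1)+4*m = 2*l+4*m+2 by ring, show (l+1)+m = l+(m+1) by ring]; ring
        _ ≤ (2*l+4*m+4).factorial * (m.factorial)^2 * ((l+(m+1)).factorial)^2 :=
            Nat.mul_le_mul_right _ hstep
        _ = (2*l+4*(m+1)).factorial * ((l+(m+1)).factorial)^2 * (m.factorial)^2 := by
            rw [show 2*l+4*(m+1) = 2*l+4*m+4 by ring]; ring
        _ ≤ (4*(l+(m+1))).factorial * ((m+1).factorial)^2 * (m.factorial)^2 := by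
            exact Nat.mul_le_mul_right _ hih
        _ = (4*((l+1)+m)).factorial * (m.factorial)^2 * ((m+1).factorial)^2 := by
            rw [show l+(m+1) = (l+1)+m by ring]; ring
    exact Nat.le_of_mul_le_mul_right key (by positivity)

lemma Estep_nat (n : ℕ) :
    (4*(n+2)).factorial * (((n+1).factorial)^3 * n.factorial)
      ≤ 256 * ((4*(n+1)).factorial * (((n+2).factorial)^3 * (n+1).factorial)) := by
  have h1 : (4*(n+2)).factorial
      = (4*n+8) * ((4*n+7) * ((4*n+6) * ((4*n+5) * (4*(n+1)).factorial))) := by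
    rw [show 4*(n+2) = (4*(n+1))+1+1+1+1 by ring, Nat.factorial_succ, Nat.factorial_succ,
        Nat.factorial_succ, Nat.factorial_succ]
    ring_nf
  have h2 : (n+2).factorial = (n+2) * (n+1).factorial := Nat.factorial_succ _
  have h3 : (n+1).factorial = (n+1) * n.factorial := Nat.factorial_succ _
  have hb : (4*n+8) * ((4*n+7) * ((4*n+6) * (4*n+5))) ≤ 256 * ((n+2)^3*(n+1)) := by
    have he : 256 * ((n+2)^3*(n+1))
        = (4*n+8) * ((4*n+7) * ((4*n+6) * (4*n+5))) + (128*n^3+592*n^2+856*n+368) := by ring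
    omega
  calc (4*(n+2)).factorial * (((n+1).factorial)^3 * n.factorial)
      = ((4*n+8) * ((4*n+7) * ((4*n+6) * (4*n+5)))) * ((4*(n+1)).factorial * (((n+1).factorial)^3 * n.factorial)) := by
        rw [h1]; ring
    _ ≤ (256 * ((n+2)^3*(n+1))) * ((4*(n+1)).factorial * (((n+1).factorial)^3 * n.factorial)) :=
        Nat.mul_le_mul_right _ hb
    _ = 256 * ((4*(n+1)).factorial * ((((n+2) * (n+1).factorial))^3 * ((n+1) * n.factorial))) := by
        ring
    _ = 256 * ((4*(n+1)).factorial * (((n+2).factorial)^3 * (n+1).factorial)) := by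
        rw [h2, h3]

noncomputable def Efun (n : ℕ) : ℝ :=
  ((4*(n+1)).factorial : ℝ) / ((((n+1).factorial : ℝ))^3 * (n.factorial : ℝ))

noncomputable def gam (N : ℕ) : ℝ := 64 * (4 + 1 / ((N : ℝ) + 1))

lemma gam_ge : ∀ N : ℕ, 256 ≤ gam N := by
  intro N
  have : 0 < 1 / ((N : ℝ) + 1) := by positivity
  unfold gam; nlinarith

lemma gam_pos (N : ℕ) : 0 < gam N := lt_of_lt_of_le (by norm_num) (gam_ge N)

lemma Efun_nonneg (n : ℕ) : 0 ≤ Efun n := by unfold Efun; positivity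

lemma Efun_step (n : ℕ) : Efun (n+1) ≤ 256 * Efun n := by
  unfold Efun
  rw [← mul_div_assoc, div_le_div_iff₀ (by positivity) (by positivity)]
  have hcast : ((4*(n+2)).factorial * (((n+1).factorial)^3 * n.factorial) : ℝ)
      ≤ (256 * ((4*(n+1)).factorial * (((n+2).factorial)^3 * (n+1).factorial)) : ℝ) := by
    exact_mod_cast Estep_nat n
  rw [show n+1+1 = n+2 by ring]
  push_cast at hcast ⊢
  nlinarith [hcast]

noncomputable def Cc (N : ℕ) : ℝ :=
  ((4 * (N + 1)).factorial : ℝ) / ((N.factorial : ℝ) * ((N + 1).factorial : ℝ) ^ 3)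

lemma Ebound (N : ℕ) : ∀ n, N ≤ n → Efun n ≤ Cc N * gam N ^ (n - N) := by
  intro n hn
  induction n, hn using Nat.le_induction with
  | base =>
    rw [Nat.sub_self, pow_zero, mul_one]
    unfold Efun Cc
    rw [mul_comm ((N.factorial : ℝ)) _]
  | succ n hn ih =>
    have h1 : Efun (n+1) ≤ 256 * Efun n := Efun_step n
    have h2 : (256:ℝ) * Efun n ≤ gam N * Efun n :=
      mul_le_mul_of_nonneg_right (gam_ge N) (Efun_nonneg n)
    have h3 : gam N * Efun n ≤ gam N * (Cc N * gam N ^ (n-N)) :=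
      mul_le_mul_of_nonneg_left ih (gam_pos N).le
    have h4 : gam N * (Cc N * gam N ^ (n-N)) = Cc N * gam N ^ (n+1-N) := by
      rw [show n+1-N = (n-N)+1 by omega, pow_succ]; ring
    linarith

lemma key1 (d m : ℕ) :
    ((d:ℝ)+1) * aCoeff (d+1) m ≤ Efun (d+m) * (((d+m).choose m : ℕ) : ℝ) := by
  have hch : (d+m).choose m * m.factorial * d.factorial = (d+m).factorial := by
    have := Nat.choose_mul_factorial_mul_factorial (Nat.le_add_left m d)
    simpa [Nat.add_sub_cancel] using this
  have hc := chain_nat (d+1) m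
  have T2 : (d+1) * (2*(d+1)+4*m).factorial * (((d+m+1).factorial)^3 * (d+m).factorial)
      ≤ (4*(d+m+1)).factorial * ((d+m).choose m) *
        ((d+m+1).factorial * (d+1).factorial * (m.factorial)^3) := by
    calc (d+1) * (2*(d+1)+4*m).factorial * (((d+m+1).factorial)^3 * (d+m).factorial)
        = ((2*(d+1)+4*m).factorial * (((d+1)+m).factorial)^2)
            * ((d+1) * (d+m+1).factorial * (d+m).factorial) := by
          rw [show (d+1)+m = d+m+1 by ring]; ring
      _ ≤ ((4*((d+1)+m)).factorial * (m.factorial)^2)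
            * ((d+1) * (d+m+1).factorial * (d+m).factorial) := Nat.mul_le_mul_right _ hc
      _ = (4*(d+m+1)).factorial * ((d+m).choose m) *
            ((d+m+1).factorial * ((d+1) * d.factorial) * (m.factorial)^3) := by
          rw [show (d+1)+m = d+m+1 by ring, ← hch]; ring
      _ = (4*(d+m+1)).factorial * ((d+m).choose m) *
            ((d+m+1).factorial * (d+1).factorial * (m.factorial)^3) := by
          simp only [← Nat.factorial_succ]
  unfold aCoeff Efun
  rw [show (d+1)+m = d+m+1 by ring]
  rw [← mul_div_assoc, div_mul_eq_mul_div, div_le_div_iff₀ (by positivity) (by positivity)]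
  have hcast := (Nat.cast_le (α := ℝ)).mpr T2
  push_cast at hcast ⊢
  nlinarith [hcast]

lemma key2 (l m : ℕ) :
    ((m:ℝ)+1) * aCoeff l (m+1) ≤ Efun (l+m) * (((l+m).choose l : ℕ) : ℝ) := by
  have hch : (l+m).choose l * l.factorial * m.factorial = (l+m).factorial := by
    have := Nat.choose_mul_factorial_mul_factorial (Nat.le_add_right l m)
    simpa [Nat.add_sub_cancel_left] using this
  have hc := chain_nat l (m+1)
  have T2 : (m+1) * (2*l+4*(m+1)).factorial * (((l+m+1).factorial)^3 * (l+m).factorial)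
      ≤ (4*(l+m+1)).factorial * ((l+m).choose l) *
        ((l+m+1).factorial * l.factorial * ((m+1).factorial)^3) := by
    calc (m+1) * (2*l+4*(m+1)).factorial * (((l+m+1).factorial)^3 * (l+m).factorial)
        = ((2*l+4*(m+1)).factorial * ((l+(m+1)).factorial)^2)
            * ((m+1) * (l+m+1).factorial * (l+m).factorial) := by
          rw [show l+(m+1) = l+m+1 by ring]; ring
      _ ≤ ((4*(l+(m+1))).factorial * ((m+1).factorial)^2)
            * ((m+1) * (l+m+1).factorial * (l+m).factorial) := Nat.mul_le_mul_right _ hc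
      _ = (4*(l+m+1)).factorial * ((l+m).choose l) *
            ((l+m+1).factorial * l.factorial * (((m+1) * m.factorial) * ((m+1).factorial)^2)) := by
          rw [show l+(m+1) = l+m+1 by ring, ← hch]; ring
      _ = (4*(l+m+1)).factorial * ((l+m).choose l) *
            ((l+m+1).factorial * l.factorial * ((m+1).factorial)^3) := by
          simp only [← Nat.factorial_succ]
          ring
  unfold aCoeff Efun
  rw [show l+(m+1) = l+m+1 by ring]
  rw [← mul_div_assoc, div_mul_eq_mul_div, div_le_div_iff₀ (by positivity) (by positivity)]
  have hcast := (Nat.cast_le (α := ℝ)).mpr T2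
  push_cast at hcast ⊢
  nlinarith [hcast]

lemma seriesBound (N : ℕ) (r : ℝ) (hr : 0 ≤ r) (h : gam N * r < 1) (f : ℕ × ℕ → ℂ)
    (hdiag : ∀ k : ℕ, ∑ p ∈ Finset.HasAntidiagonal.antidiagonal k, ‖(f p)‖ ≤
      (if N + 1 ≤ k then Cc N * gam N ^ (k - (N+1)) * r ^ (k-1) else 0)) :
    Summable f ∧ ‖(∑' p, f p)‖ ≤ Cc N * r ^ N / (1 - gam N * r) := by
  have hgr0 : 0 ≤ gam N * r := mul_nonneg (gam_pos N).le hr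
  have hgr1 : gam N * r < 1 := h
  have h1gr : 0 < 1 - gam N * r := by linarith
  have hCc : 0 ≤ Cc N := by unfold Cc; positivity
  set B : ℝ := Cc N * r ^ N / (1 - gam N * r) with hB
  have hBnn : 0 ≤ B := by positivity
  -- bound on arbitrary finite sums of |f|
  have hfin : ∀ s : Finset (ℕ × ℕ), ∑ p ∈ s, ‖(f p)‖ ≤ B := by
    intro s
    set K : ℕ := (s.sup fun p => p.1 + p.2) + 1 with hK
    have hsub : s ⊆ (Finset.range K).biUnion (fun k => Finset.HasAntidiagonal.antidiagonal k) := by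
      intro p hp
      refine Finset.mem_biUnion.mpr ⟨p.1 + p.2, ?_, ?_⟩
      · exact Finset.mem_range.mpr (Nat.lt_succ_of_le (Finset.le_sup (f := fun p => p.1 + p.2) hp))
      · exact Finset.HasAntidiagonal.mem_antidiagonal.mpr rfl
    have hdisj : (↑(Finset.range K) : Set ℕ).PairwiseDisjoint
        (fun k => Finset.HasAntidiagonal.antidiagonal k) := by
      intro a _ b _ hab
      simp only [Function.onFun, Finset.disjoint_left]
      intro p hpa hpb
      exact hab ((Finset.HasAntidiagonal.mem_antidiagonal.mp hpa).symm.trans (Finset.HasAntidiagonal.mem_antidiagonal.mp hpb))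
    calc ∑ p ∈ s, ‖(f p)‖
        ≤ ∑ p ∈ (Finset.range K).biUnion (fun k => Finset.HasAntidiagonal.antidiagonal k),
            ‖(f p)‖ :=
          Finset.sum_le_sum_of_subset_of_nonneg hsub (fun p _ _ => norm_nonneg _)
      _ = ∑ k ∈ Finset.range K, ∑ p ∈ Finset.HasAntidiagonal.antidiagonal k, ‖(f p)‖ :=
          Finset.sum_biUnion hdisj
      _ ≤ ∑ k ∈ Finset.range K,
            (if N + 1 ≤ k then Cc N * gam N ^ (k - (N+1)) * r ^ (k-1) else 0) :=
          Finset.sum_le_sum (fun k _ => hdiag k)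
      _ ≤ B := by
          rcases le_or_gt K (N+1) with hKN | hKN
          · have : ∀ k ∈ Finset.range K,
                (if N + 1 ≤ k then Cc N * gam N ^ (k - (N+1)) * r ^ (k-1) else 0) = 0 := by
              intro k hk
              rw [if_neg]
              have := Finset.mem_range.mp hk
              omega
            rw [Finset.sum_congr rfl this, Finset.sum_const, smul_zero]
            exact hBnn
          · rw [Finset.range_eq_Ico,
              ← Finset.sum_Ico_consecutive _ (Nat.zero_le (N+1)) hKN.le]
            have hz : ∑ k ∈ Finset.Ico 0 (N+1),
                (if N + 1 ≤ k then Cc N * gam N ^ (k - (N+1)) * r ^ (k-1) else 0) = 0 := by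
              apply Finset.sum_eq_zero
              intro k hk
              rw [if_neg]
              have := (Finset.mem_Ico.mp hk).2
              omega
            rw [hz, zero_add, Finset.sum_Ico_eq_sum_range]
            have hterm : ∀ j, (if N + 1 ≤ N + 1 + j then
                Cc N * gam N ^ ((N+1+j) - (N+1)) * r ^ ((N+1+j)-1) else 0)
                = (Cc N * r ^ N) * (gam N * r) ^ j := by
              intro j
              rw [if_pos (by omega), show (N+1+j) - (N+1) = j by omega,
                show (N+1+j) - 1 = N + j by omega, pow_add, mul_pow]
              ring
            rw [Finset.sum_congr rfl (fun j _ => hterm j)]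
            rw [← Finset.mul_sum]
            have hgeo : ∑ j ∈ Finset.range (K - (N+1)), (gam N * r) ^ j
                ≤ (1 - gam N * r)⁻¹ := by
              have hsumm := summable_geometric_of_lt_one hgr0 hgr1
              calc ∑ j ∈ Finset.range (K - (N+1)), (gam N * r) ^ j
                  ≤ ∑' j : ℕ, (gam N * r) ^ j :=
                    Summable.sum_le_tsum _ (fun j _ => pow_nonneg hgr0 j) hsumm
                _ = (1 - gam N * r)⁻¹ := tsum_geometric_of_lt_one hgr0 hgr1
            calc (Cc N * r ^ N) * ∑ j ∈ Finset.range (K - (N+1)), (gam N * r) ^ j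
                ≤ (Cc N * r ^ N) * (1 - gam N * r)⁻¹ :=
                  mul_le_mul_of_nonneg_left hgeo (by positivity)
              _ = B := by rw [hB, div_eq_mul_inv]
  have hsa : Summable (fun p => ‖(f p)‖) :=
    summable_of_sum_le (fun p => norm_nonneg _) hfin
  have hsn : Summable (fun p => ‖f p‖) := by
    simpa using hsa
  have hsf : Summable f := Summable.of_norm hsn
  refine ⟨hsf, ?_⟩
  calc ‖∑' p, f p‖ ≤ ∑' p, ‖f p‖ := norm_tsum_le_tsum_norm hsn
    _ = ∑' p, ‖(f p)‖ := by simp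
    _ ≤ B := Summable.tsum_le_of_sum_le hsa hfin

lemma aCoeff_nonneg (l m : ℕ) : 0 ≤ aCoeff l m := by unfold aCoeff; positivity

lemma diag1 (N : ℕ) (lam mu : ℂ) (k : ℕ) :
    ∑ p ∈ Finset.HasAntidiagonal.antidiagonal k, ‖(if N + 1 ≤ p.1 + p.2 then (p.1 : ℂ) * (aCoeff p.1 p.2 : ℂ) * lam ^ (p.1 - 1) * mu ^ p.2
        else 0)‖
    ≤ if N + 1 ≤ k then Cc N * gam N ^ (k - (N+1)) *
        (‖lam‖ + ‖mu‖) ^ (k-1) else 0 := by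
  by_cases hk : N + 1 ≤ k
  · rw [if_pos hk]
    obtain ⟨n, rfl⟩ : ∃ n, k = n + 1 := ⟨k - 1, by omega⟩
    have hNn : N ≤ n := by omega
    rw [Finset.Nat.sum_antidiagonal_eq_sum_range_succ_mk, Finset.sum_range_succ']
    have hz : ‖(if N + 1 ≤ 0 + (n + 1 - 0) then
        ((0:ℕ) : ℂ) * (aCoeff 0 (n+1-0) : ℂ) * lam ^ (0 - 1) * mu ^ (n+1-0) else 0)‖ = 0 := by
      simp
    rw [hz, add_zero]
    have hterm : ∀ i ∈ Finset.range (n+1),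
        ‖(if N + 1 ≤ (i+1) + (n + 1 - (i+1)) then
          ((i+1:ℕ) : ℂ) * (aCoeff (i+1) (n+1-(i+1)) : ℂ) * lam ^ ((i+1) - 1) * mu ^ (n+1-(i+1))
          else 0)‖
        ≤ (Cc N * gam N ^ (n - N)) *
            (((n.choose i : ℕ) : ℝ) * (‖lam‖) ^ i * (‖mu‖) ^ (n - i)) := by
      intro i hi
      have hi' : i ≤ n := by
        have := Finset.mem_range.mp hi; omega
      rw [show n + 1 - (i+1) = n - i by omega, show (i+1) - 1 = i by omega,
        if_pos (by omega : N + 1 ≤ (i+1) + (n - i))]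
      rw [norm_mul, norm_mul, norm_mul, norm_pow, norm_pow, Complex.norm_natCast,
        Complex.norm_real, Real.norm_eq_abs, abs_of_nonneg (aCoeff_nonneg _ _)]
      have hkey := key1 i (n - i)
      rw [show i + (n - i) = n by omega] at hkey
      have hE := Ebound N n hNn
      have hEc : Efun n * ((n.choose (n-i) : ℕ) : ℝ)
          ≤ (Cc N * gam N ^ (n - N)) * ((n.choose (n-i) : ℕ) : ℝ) :=
        mul_le_mul_of_nonneg_right hE (by positivity)
      have hcs : (n.choose (n - i)) = n.choose i := Nat.choose_symm hi'
      have h1 : ((i:ℝ)+1) * aCoeff (i+1) (n-i) ≤ (Cc N * gam N ^ (n - N)) * ((n.choose i : ℕ) : ℝ) := by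
        rw [← hcs]; exact hkey.trans hEc
      have hic : (((i+1:ℕ)) : ℝ) = (i:ℝ) + 1 := by push_cast; ring
      rw [hic]
      calc ((i:ℝ) + 1) * aCoeff (i+1) (n-i) * (‖lam‖) ^ i * (‖mu‖) ^ (n-i)
          ≤ (Cc N * gam N ^ (n - N)) * ((n.choose i : ℕ) : ℝ)
              * (‖lam‖) ^ i * (‖mu‖) ^ (n-i) := by
            have := mul_le_mul_of_nonneg_right (mul_le_mul_of_nonneg_right h1
              (by positivity : (0:ℝ) ≤ (‖lam‖) ^ i))
              (by positivity : (0:ℝ) ≤ (‖mu‖) ^ (n-i))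
            exact this
        _ = (Cc N * gam N ^ (n - N)) *
              (((n.choose i : ℕ) : ℝ) * (‖lam‖) ^ i * (‖mu‖) ^ (n - i)) := by
            ring
    calc ∑ i ∈ Finset.range (n+1), ‖(if N + 1 ≤ (i+1) + (n + 1 - (i+1)) then
          ((i+1:ℕ) : ℂ) * (aCoeff (i+1) (n+1-(i+1)) : ℂ) * lam ^ ((i+1) - 1) * mu ^ (n+1-(i+1))
          else 0)‖
        ≤ ∑ i ∈ Finset.range (n+1), (Cc N * gam N ^ (n - N)) *
            (((n.choose i : ℕ) : ℝ) * (‖lam‖) ^ i * (‖mu‖) ^ (n - i)) :=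
          Finset.sum_le_sum hterm
      _ = (Cc N * gam N ^ (n - N)) * (‖lam‖ + ‖mu‖) ^ n := by
          rw [← Finset.mul_sum, add_pow]
          congr 1
          apply Finset.sum_congr rfl
          intro i hi
          ring
      _ = Cc N * gam N ^ ((n+1) - (N+1)) * (‖lam‖ + ‖mu‖) ^ ((n+1) - 1) := by
          rw [show (n+1) - (N+1) = n - N by omega, show (n+1) - 1 = n by omega]
  · rw [if_neg hk]
    have : ∀ p ∈ Finset.HasAntidiagonal.antidiagonal k, ‖(if N + 1 ≤ p.1 + p.2 then (p.1 : ℂ) * (aCoeff p.1 p.2 : ℂ) * lam ^ (p.1 - 1) * mu ^ p.2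
          else 0)‖ = 0 := by
      intro p hp
      rw [if_neg (by rw [Finset.HasAntidiagonal.mem_antidiagonal.mp hp]; exact hk), norm_zero]
    rw [Finset.sum_congr rfl this, Finset.sum_const, smul_zero]

lemma diag2 (N : ℕ) (lam mu : ℂ) (k : ℕ) :
    ∑ p ∈ Finset.HasAntidiagonal.antidiagonal k, ‖(if N + 1 ≤ p.1 + p.2 then (p.2 : ℂ) * (aCoeff p.1 p.2 : ℂ) * lam ^ p.1 * mu ^ (p.2 - 1)
        else 0)‖
    ≤ if N + 1 ≤ k then Cc N * gam N ^ (k - (N+1)) *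
        (‖lam‖ + ‖mu‖) ^ (k-1) else 0 := by
  by_cases hk : N + 1 ≤ k
  · rw [if_pos hk]
    obtain ⟨n, rfl⟩ : ∃ n, k = n + 1 := ⟨k - 1, by omega⟩
    have hNn : N ≤ n := by omega
    rw [Finset.Nat.sum_antidiagonal_eq_sum_range_succ_mk, Finset.sum_range_succ]
    have hz : ‖(if N + 1 ≤ (n+1) + (n + 1 - (n+1)) then
        ((n + 1 - (n+1) : ℕ) : ℂ) * (aCoeff (n+1) (n+1-(n+1)) : ℂ) * lam ^ (n+1)
          * mu ^ ((n+1-(n+1)) - 1) else 0)‖ = 0 := by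
      simp
    rw [hz, add_zero]
    have hterm : ∀ i ∈ Finset.range (n+1),
        ‖(if N + 1 ≤ i + (n + 1 - i) then
          ((n + 1 - i : ℕ) : ℂ) * (aCoeff i (n+1-i) : ℂ) * lam ^ i * mu ^ ((n+1-i) - 1)
          else 0)‖
        ≤ (Cc N * gam N ^ (n - N)) *
            (((n.choose i : ℕ) : ℝ) * (‖lam‖) ^ i * (‖mu‖) ^ (n - i)) := by
      intro i hi
      have hi' : i ≤ n := by
        have := Finset.mem_range.mp hi; omega
      rw [show n + 1 - i = (n - i) + 1 by omega, show ((n-i)+1) - 1 = n - i by omega,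
        if_pos (by omega : N + 1 ≤ i + ((n - i) + 1))]
      rw [norm_mul, norm_mul, norm_mul, norm_pow, norm_pow, Complex.norm_natCast,
        Complex.norm_real, Real.norm_eq_abs, abs_of_nonneg (aCoeff_nonneg _ _)]
      have hkey := key2 i (n - i)
      rw [show i + (n - i) = n by omega] at hkey
      have hE := Ebound N n hNn
      have hEc : Efun n * ((n.choose i : ℕ) : ℝ)
          ≤ (Cc N * gam N ^ (n - N)) * ((n.choose i : ℕ) : ℝ) :=
        mul_le_mul_of_nonneg_right hE (by positivity)
      have h1 : ((((n-i : ℕ)):ℝ)+1) * aCoeff i ((n-i)+1)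
          ≤ (Cc N * gam N ^ (n - N)) * ((n.choose i : ℕ) : ℝ) := hkey.trans hEc
      have hic : ((((n-i)+1:ℕ)) : ℝ) = (((n-i:ℕ)):ℝ) + 1 := by push_cast; ring
      rw [hic]
      calc ((((n-i:ℕ)):ℝ) + 1) * aCoeff i ((n-i)+1) * (‖lam‖) ^ i * (‖mu‖) ^ (n-i)
          ≤ (Cc N * gam N ^ (n - N)) * ((n.choose i : ℕ) : ℝ)
              * (‖lam‖) ^ i * (‖mu‖) ^ (n-i) :=
            mul_le_mul_of_nonneg_right (mul_le_mul_of_nonneg_right h1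
              (by positivity : (0:ℝ) ≤ (‖lam‖) ^ i))
              (by positivity : (0:ℝ) ≤ (‖mu‖) ^ (n-i))
        _ = (Cc N * gam N ^ (n - N)) *
              (((n.choose i : ℕ) : ℝ) * (‖lam‖) ^ i * (‖mu‖) ^ (n - i)) := by
            ring
    calc ∑ i ∈ Finset.range (n+1), ‖(if N + 1 ≤ i + (n + 1 - i) then
          ((n + 1 - i : ℕ) : ℂ) * (aCoeff i (n+1-i) : ℂ) * lam ^ i * mu ^ ((n+1-i) - 1)
          else 0)‖
        ≤ ∑ i ∈ Finset.range (n+1), (Cc N * gam N ^ (n - N)) *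
            (((n.choose i : ℕ) : ℝ) * (‖lam‖) ^ i * (‖mu‖) ^ (n - i)) :=
          Finset.sum_le_sum hterm
      _ = (Cc N * gam N ^ (n - N)) * (‖lam‖ + ‖mu‖) ^ n := by
          rw [← Finset.mul_sum, add_pow]
          congr 1
          apply Finset.sum_congr rfl
          intro i hi
          ring
      _ = Cc N * gam N ^ ((n+1) - (N+1)) * (‖lam‖ + ‖mu‖) ^ ((n+1) - 1) := by
          rw [show (n+1) - (N+1) = n - N by omega, show (n+1) - 1 = n by omega]
  · rw [if_neg hk]
    have : ∀ p ∈ Finset.HasAntidiagonal.antidiagonal k, ‖(if N + 1 ≤ p.1 + p.2 then (p.2 : ℂ) * (aCoeff p.1 p.2 : ℂ) * lam ^ p.1 * mu ^ (p.2 - 1)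
          else 0)‖ = 0 := by
      intro p hp
      rw [if_neg (by rw [Finset.HasAntidiagonal.mem_antidiagonal.mp hp]; exact hk), norm_zero]
    rw [Finset.sum_congr rfl this, Finset.sum_const, smul_zero]

theorem tail_bound_delta6 (N : ℕ) (lam mu : ℂ)
    (h : 64 * (4 + 1 / ((N : ℝ) + 1)) * (‖lam‖ + ‖mu‖) < 1) :
    Summable (fun p : ℕ × ℕ =>
      if N + 1 ≤ p.1 + p.2 then (p.1 : ℂ) * (aCoeff p.1 p.2 : ℂ) * lam ^ (p.1 - 1) * mu ^ p.2
      else 0) ∧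
    ‖(∑' p : ℕ × ℕ,
        if N + 1 ≤ p.1 + p.2 then (p.1 : ℂ) * (aCoeff p.1 p.2 : ℂ) * lam ^ (p.1 - 1) * mu ^ p.2
        else 0)‖ ≤
      ((4 * (N + 1)).factorial : ℝ) / ((N.factorial : ℝ) * ((N + 1).factorial : ℝ) ^ 3) *
        (‖lam‖ + ‖mu‖) ^ N /
        (1 - 64 * (4 + 1 / ((N : ℝ) + 1)) * (‖lam‖ + ‖mu‖)) ∧
    Summable (fun p : ℕ × ℕ =>
      if N + 1 ≤ p.1 + p.2 then (p.2 : ℂ) * (aCoeff p.1 p.2 : ℂ) * lam ^ p.1 * mu ^ (p.2 - 1)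
      else 0) ∧
    ‖(∑' p : ℕ × ℕ,
        if N + 1 ≤ p.1 + p.2 then (p.2 : ℂ) * (aCoeff p.1 p.2 : ℂ) * lam ^ p.1 * mu ^ (p.2 - 1)
        else 0)‖ ≤
      ((4 * (N + 1)).factorial : ℝ) / ((N.factorial : ℝ) * ((N + 1).factorial : ℝ) ^ 3) *
        (‖lam‖ + ‖mu‖) ^ N /
        (1 - 64 * (4 + 1 / ((N : ℝ) + 1)) * (‖lam‖ + ‖mu‖)) := by
  have hr : 0 ≤ ‖lam‖ + ‖mu‖ := by positivity
  have h' : gam N * (‖lam‖ + ‖mu‖) < 1 := by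
    unfold gam; exact h
  have H1 := seriesBound N (‖lam‖ + ‖mu‖) hr h'
    (fun p : ℕ × ℕ =>
      if N + 1 ≤ p.1 + p.2 then (p.1 : ℂ) * (aCoeff p.1 p.2 : ℂ) * lam ^ (p.1 - 1) * mu ^ p.2
      else 0) (fun k => diag1 N lam mu k)
  have H2 := seriesBound N (‖lam‖ + ‖mu‖) hr h'
    (fun p : ℕ × ℕ =>
      if N + 1 ≤ p.1 + p.2 then (p.2 : ℂ) * (aCoeff p.1 p.2 : ℂ) * lam ^ p.1 * mu ^ (p.2 - 1)
      else 0) (fun k => diag2 N lam mu k)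
  refine ⟨H1.1, ?_, H2.1, ?_⟩
  · have := H1.2
    unfold Cc gam at this
    exact this
  · have := H2.2
    unfold Cc gam at this
    exact this
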